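/- The number of ordered pairs (ρ, σ) of perfect matchings (partitions into blocks of size 2) of the set {1,...,2k} whose join ρ∨σ in the partition lattice is the one-block partition equals (2k−1)!. -/

import Mathlib

open Function

namespace CMP

variable {n : ℕ}

/-! ### Matching setoids from fixed-point-free involutions -/

def matchSetoid (f : Fin n → Fin n) (hf : Involutive f) : Setoid (Fin n) where
  r x y := y = x ∨ y = f x
  iseqv := by
    constructor
    · exact fun x => Or.inl rfl
    · rintro x y (rfl | rfl)
      · exact Or.inl rfl
      · exact Or.inr (hf x).symm
    · intro x y z h1 h2
      rcases h1 with rfl | rfl <;> rcases h2 with rfl | rfl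
      · exact Or.inl rfl
      · exact Or.inr rfl
      · exact Or.inr rfl
      · exact Or.inl (hf x)

lemma matchSetoid_rel {f : Fin n → Fin n} {hf : Involutive f} {x y : Fin n} :
    (matchSetoid f hf).r x y ↔ (y = x ∨ y = f x) := Iff.rfl

lemma card_matchSetoid {f : Fin n → Fin n} (hf : Involutive f) (hf' : ∀ x, f x ≠ x) (x : Fin n) :
    Nat.card {y // (matchSetoid f hf).r x y} = 2 := by
  rw [Nat.card_eq_two_iff]
  refine ⟨⟨x, Or.inl rfl⟩, ⟨f x, Or.inr rfl⟩, ?_, ?_⟩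
  · intro h
    exact hf' x (congrArg Subtype.val h).symm
  · ext ⟨z, hz⟩
    simp only [Set.mem_insert_iff, Set.mem_singleton_iff, Set.mem_univ, iff_true]
    rcases hz with rfl | rfl
    · exact Or.inl rfl
    · exact Or.inr rfl

lemma exists_partner (p : Setoid (Fin n)) (x : Fin n) (h : Nat.card {y // p.r x y} = 2) :
    ∃ y, p.r x y ∧ y ≠ x ∧ ∀ z, p.r x z → z = x ∨ z = y := by
  rw [Nat.card_eq_two_iff] at h
  obtain ⟨a, b, hab, huniv⟩ := h
  have hmem : ∀ z : {y // p.r x y}, z = a ∨ z = b := by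
    intro z
    have hz : z ∈ ({a, b} : Set {y // p.r x y}) := huniv.symm ▸ Set.mem_univ z
    simpa using hz
  rcases hmem ⟨x, p.refl x⟩ with hx | hx
  · have hax : a.1 = x := (congrArg Subtype.val hx).symm
    refine ⟨b.1, b.2, ?_, ?_⟩
    · intro hbx
      exact hab (Subtype.ext (by rw [hax, hbx]))
    · intro z hz
      rcases hmem ⟨z, hz⟩ with h | h
      · exact Or.inl (by rw [← hax]; exact congrArg Subtype.val h)
      · exact Or.inr (congrArg Subtype.val h)
  · have hbx : b.1 = x := (congrArg Subtype.val hx).symm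
    refine ⟨a.1, a.2, ?_, ?_⟩
    · intro hax
      exact hab (Subtype.ext (by rw [hax, hbx]))
    · intro z hz
      rcases hmem ⟨z, hz⟩ with h | h
      · exact Or.inr (congrArg Subtype.val h)
      · exact Or.inl (by rw [← hbx]; exact congrArg Subtype.val h)

noncomputable def pf (p : Setoid (Fin n)) (hp : ∀ x, Nat.card {y // p.r x y} = 2)
    (x : Fin n) : Fin n :=
  (exists_partner p x (hp x)).choose

lemma pf_rel (p : Setoid (Fin n)) (hp : ∀ x, Nat.card {y // p.r x y} = 2) (x : Fin n) :
    p.r x (pf p hp x) :=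
  (exists_partner p x (hp x)).choose_spec.1

lemma pf_ne (p : Setoid (Fin n)) (hp : ∀ x, Nat.card {y // p.r x y} = 2) (x : Fin n) :
    pf p hp x ≠ x :=
  (exists_partner p x (hp x)).choose_spec.2.1

lemma pf_total (p : Setoid (Fin n)) (hp : ∀ x, Nat.card {y // p.r x y} = 2) {x z : Fin n}
    (hz : p.r x z) : z = x ∨ z = pf p hp x :=
  (exists_partner p x (hp x)).choose_spec.2.2 z hz

lemma pf_invol (p : Setoid (Fin n)) (hp : ∀ x, Nat.card {y // p.r x y} = 2) :
    Involutive (pf p hp) := by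
  intro x
  have h1 : p.r (pf p hp x) x := p.symm (pf_rel p hp x)
  rcases pf_total p hp h1 with h | h
  · exact absurd h (pf_ne p hp x).symm
  · exact h.symm

lemma rel_iff_pf (p : Setoid (Fin n)) (hp : ∀ x, Nat.card {y // p.r x y} = 2) (x y : Fin n) :
    p.r x y ↔ (y = x ∨ y = pf p hp x) := by
  constructor
  · exact pf_total p hp
  · rintro (rfl | rfl)
    · exact p.refl _
    · exact pf_rel p hp _

lemma matchSetoid_pf (p : Setoid (Fin n)) (hp : ∀ x, Nat.card {y // p.r x y} = 2)
    (hI : Involutive (pf p hp)) : matchSetoid (pf p hp) hI = p :=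
  Setoid.ext fun a b => (matchSetoid_rel.trans (rel_iff_pf p hp a b).symm)

lemma pf_matchSetoid {f : Fin n → Fin n} (hf : Involutive f)
    (hp : ∀ x, Nat.card {y // (matchSetoid f hf).r x y} = 2) :
    pf (matchSetoid f hf) hp = f := by
  funext x
  rcases pf_rel (matchSetoid f hf) hp x with h | h
  · exact absurd h (pf_ne _ _ _)
  · exact h


/-! ### The alternating walk -/

section Walk

variable [NeZero n]

def walk (f g : Fin n → Fin n) : ℕ → Fin n
  | 0 => 0
  | i + 1 => (if Even i then f else g) (walk f g i)

variable {f g : Fin n → Fin n}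

lemma walk_even (j : ℕ) : walk f g (2 * j) = (g ∘ f)^[j] 0 := by
  induction j with
  | zero => rfl
  | succ j ih =>
    have h1 : 2 * (j + 1) = (2 * j + 1) + 1 := by ring
    rw [h1, walk, walk, if_pos (even_two_mul j), if_neg (by simp [Nat.even_add_one]),
      iterate_succ_apply', ih]
    rfl

lemma walk_odd (j : ℕ) : walk f g (2 * j + 1) = f ((g ∘ f)^[j] 0) := by
  rw [walk, if_pos (even_two_mul j), walk_even]

lemma iter_conj (hf : Involutive f) (hg : Involutive g) :
    ∀ (j : ℕ) (x : Fin n), (g ∘ f)^[j] (f ((g ∘ f)^[j] x)) = f x := by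
  intro j
  induction j with
  | zero => intro x; rfl
  | succ j ih =>
    intro x
    have h1 : (g ∘ f)^[j + 1] x = (g ∘ f)^[j] ((g ∘ f) x) := iterate_succ_apply _ _ _
    have h2 : ∀ y : Fin n, (g ∘ f)^[j + 1] y = (g ∘ f) ((g ∘ f)^[j] y) :=
      fun y => iterate_succ_apply' _ _ _
    rw [h1, h2, ih ((g ∘ f) x)]
    show g (f (f (g (f x)))) = f x
    rw [hf (g (f x)), hg (f x)]

lemma key_no_return (hf : Involutive f) (hg : Involutive g)
    (hf' : ∀ x, f x ≠ x) (hg' : ∀ x, g x ≠ x) :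
    ∀ m : ℕ, f 0 ≠ (g ∘ f)^[m] 0 := by
  have hcinj : Injective (g ∘ f) := hg.injective.comp hf.injective
  intro m hm
  rcases Nat.even_or_odd m with ⟨j, hj⟩ | ⟨j, hj⟩
  · -- m = j + j : f has a fixed point at (g∘f)^[j] 0
    have h1 : (g ∘ f)^[j] (f ((g ∘ f)^[j] 0)) = (g ∘ f)^[j] ((g ∘ f)^[j] 0) := by
      rw [iter_conj hf hg, ← iterate_add_apply, ← hj]
      exact hm
    exact hf' _ (hcinj.iterate j h1)
  · -- m = 2j + 1 : g has a fixed point at (g∘f)^[j+1] 0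
    have h1 : (g ∘ f)^[j + 1] (f ((g ∘ f)^[j + 1] 0)) = (g ∘ f)^[j + 1] ((g ∘ f)^[j] 0) := by
      rw [iter_conj hf hg, ← iterate_add_apply, show j + 1 + j = m by omega]
      exact hm
    have h2 : f ((g ∘ f)^[j + 1] 0) = (g ∘ f)^[j] 0 := hcinj.iterate (j + 1) h1
    apply hg' ((g ∘ f)^[j + 1] 0)
    calc g ((g ∘ f)^[j + 1] 0) = (g ∘ f) (f ((g ∘ f)^[j + 1] 0)) := by
          show _ = g (f (f _)); rw [hf]
      _ = (g ∘ f)^[j + 1] 0 := by rw [h2, ← iterate_succ_apply' (g ∘ f) j 0]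

lemma disj_AB (hf : Involutive f) (hg : Involutive g)
    (hf' : ∀ x, f x ≠ x) (hg' : ∀ x, g x ≠ x) :
    ∀ a b : ℕ, f ((g ∘ f)^[a] 0) ≠ (g ∘ f)^[b] 0 := by
  intro a b hab
  apply key_no_return hf hg hf' hg' (a + b)
  rw [← iter_conj hf hg a 0, hab, ← iterate_add_apply]

lemma exists_period (hf : Involutive f) (hg : Involutive g) :
    ∃ p, 0 < p ∧ (g ∘ f)^[p] 0 = (0 : Fin n) := by
  have hcinj : Injective (g ∘ f) := hg.injective.comp hf.injective
  have : ¬ Injective (fun i : Fin (n + 1) => (g ∘ f)^[i.1] (0 : Fin n)) := by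
    intro hinj
    have := Fintype.card_le_of_injective _ hinj
    simp [Fintype.card_fin] at this
  rw [Injective] at this
  push_neg at this
  obtain ⟨a, b, hab, hne⟩ := this
  rcases Nat.lt_or_ge a.1 b.1 with h | h
  · refine ⟨b.1 - a.1, by omega, ?_⟩
    have : (g ∘ f)^[a.1] ((g ∘ f)^[b.1 - a.1] 0) = (g ∘ f)^[a.1] 0 := by
      rw [← iterate_add_apply]
      have : a.1 + (b.1 - a.1) = b.1 := by omega
      rw [this, hab]
    exact hcinj.iterate a.1 this
  · have h' : b.1 < a.1 := by
      rcases Nat.lt_or_ge b.1 a.1 with h' | h'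
      · exact h'
      · exact absurd (Fin.ext (le_antisymm h h')).symm hne
    refine ⟨a.1 - b.1, by omega, ?_⟩
    have : (g ∘ f)^[b.1] ((g ∘ f)^[a.1 - b.1] 0) = (g ∘ f)^[b.1] 0 := by
      rw [← iterate_add_apply]
      have h2 : b.1 + (a.1 - b.1) = a.1 := by omega
      rw [h2, ← hab]
    exact hcinj.iterate b.1 this

end Walk
/-! ### Connectivity and reachability -/

section Conn

variable [NeZero n] {f g : Fin n → Fin n}

/-- reachability predicate: `x` lies on the alternating walk. -/
def Reach (f g : Fin n → Fin n) (x : Fin n) : Prop :=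
  (∃ j, (g ∘ f)^[j] 0 = x) ∨ (∃ j, f ((g ∘ f)^[j] 0) = x)

lemma reach_of_conn (hf : Involutive f) (hg : Involutive g)
    (hf' : ∀ x, f x ≠ x) (hg' : ∀ x, g x ≠ x)
    (hconn : matchSetoid f hf ⊔ matchSetoid g hg = ⊤) :
    ∀ x : Fin n, Reach f g x := by
  obtain ⟨P, hP, hP0⟩ := exists_period hf hg
  set r : Fin n → Fin n → Prop :=
    fun a b => (matchSetoid f hf).r a b ∨ (matchSetoid g hg).r a b with hr
  -- one step preserves reachability
  have hstep : ∀ a b : Fin n, r a b → Reach f g a → Reach f g b := by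
    rintro a b (h | h) ha
    · rcases h with rfl | rfl
      · exact ha
      · rcases ha with ⟨j, rfl⟩ | ⟨j, rfl⟩
        · exact Or.inr ⟨j, rfl⟩
        · exact Or.inl ⟨j, (hf _).symm⟩
    · rcases h with rfl | rfl
      · exact ha
      · rcases ha with ⟨j, rfl⟩ | ⟨j, rfl⟩
        · -- b = g ((g∘f)^[j] 0)
          rcases j with - | j
          · -- g 0 ∈ B, using the period
            refine Or.inr ⟨P - 1, ?_⟩
            have hP1 : P - 1 + 1 = P := by omega
            have h1 : (g ∘ f) ((g ∘ f)^[P - 1] 0) = (0 : Fin n) := by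
              have h0 := hP0
              rw [← hP1, iterate_succ_apply'] at h0
              exact h0
            have h2 : f ((g ∘ f)^[P - 1] 0) = g (0 : Fin n) := by
              conv_rhs => rw [← h1]
              show f ((g ∘ f)^[P - 1] 0) = g (g (f ((g ∘ f)^[P - 1] 0)))
              rw [hg]
            exact h2
          · refine Or.inr ⟨j, ?_⟩
            have h1 : (g ∘ f)^[j + 1] (0 : Fin n) = g (f ((g ∘ f)^[j] 0)) :=
              iterate_succ_apply' _ _ _
            rw [h1]
            show f ((g ∘ f)^[j] 0) = g (g (f ((g ∘ f)^[j] 0)))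
            rw [hg]
        · exact Or.inl ⟨j + 1, (iterate_succ_apply' _ _ _).trans rfl⟩
  have hsymm : ∀ a b : Fin n, r a b → r b a := by
    rintro a b (h | h)
    · exact Or.inl ((matchSetoid f hf).symm h)
    · exact Or.inr ((matchSetoid g hg).symm h)
  -- every point is Relation.EqvGen-related to 0
  intro x
  have hx : Relation.EqvGen r 0 x := by
    have h1 : (matchSetoid f hf ⊔ matchSetoid g hg).r 0 x := by
      rw [hconn]; trivial
    rw [Setoid.sup_eq_eqvGen] at h1
    exact h1
  have hiff : ∀ a b : Fin n, Relation.EqvGen r a b → (Reach f g a ↔ Reach f g b) := by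
    intro a b hab
    induction hab with
    | rel a b h => exact ⟨hstep a b h, hstep b a (hsymm a b h)⟩
    | refl a => exact Iff.rfl
    | symm a b _ ih => exact ih.symm
    | trans a b c _ _ ih1 ih2 => exact ih1.trans ih2
  exact (hiff 0 x hx).mp (Or.inl ⟨0, rfl⟩)

lemma conn_of_reach (hf : Involutive f) (hg : Involutive g)
    (hre : ∀ x : Fin n, Reach f g x) :
    matchSetoid f hf ⊔ matchSetoid g hg = ⊤ := by
  rw [Setoid.sup_eq_eqvGen]
  set r : Fin n → Fin n → Prop :=
    fun a b => (matchSetoid f hf).r a b ∨ (matchSetoid g hg).r a b with hr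
  apply le_antisymm le_top
  rw [Setoid.le_def]
  intro x y _
  show Relation.EqvGen r x y
  have hzero : ∀ z : Fin n, Relation.EqvGen r 0 z := by
    have hj : ∀ j : ℕ, Relation.EqvGen r 0 ((g ∘ f)^[j] 0) ∧ Relation.EqvGen r 0 (f ((g ∘ f)^[j] 0)) := by
      intro j
      induction j with
      | zero =>
        exact ⟨Relation.EqvGen.refl 0, Relation.EqvGen.rel _ _ (Or.inl (Or.inr rfl))⟩
      | succ j ih =>
        have h1 : (g ∘ f)^[j + 1] (0 : Fin n) = g (f ((g ∘ f)^[j] 0)) :=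
          iterate_succ_apply' _ _ _
        have step1 : Relation.EqvGen r 0 ((g ∘ f)^[j + 1] 0) := by
          rw [h1]
          exact Relation.EqvGen.trans _ _ _ ih.2 (Relation.EqvGen.rel _ _ (Or.inr (Or.inr rfl)))
        exact ⟨step1, Relation.EqvGen.trans _ _ _ step1 (Relation.EqvGen.rel _ _ (Or.inl (Or.inr rfl)))⟩
    intro z
    rcases hre z with ⟨j, rfl⟩ | ⟨j, rfl⟩
    · exact (hj j).1
    · exact (hj j).2
  exact Relation.EqvGen.trans _ _ _ (Relation.EqvGen.symm _ _ (hzero x)) (hzero y)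

end Conn
/-! ### Bijectivity of the walk -/

section Main

variable [NeZero n] {f g : Fin n → Fin n}

theorem walk_main (hf : Involutive f) (hg : Involutive g)
    (hf' : ∀ x, f x ≠ x) (hg' : ∀ x, g x ≠ x)
    (hre : ∀ x : Fin n, Reach f g x) :
    Bijective (fun i : Fin n => walk f g i.1) ∧ walk f g n = 0 := by
  have hcinj : Injective (g ∘ f) := hg.injective.comp hf.injective
  have hper := exists_period hf hg (f := f) (g := g)
  set d := Nat.find hper with hd
  obtain ⟨hdpos, hd0⟩ : 0 < d ∧ (g ∘ f)^[d] 0 = (0 : Fin n) := Nat.find_spec hper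
  -- reduction modulo d
  have hmod : ∀ j : ℕ, (g ∘ f)^[j] (0 : Fin n) = (g ∘ f)^[j % d] 0 := by
    intro j
    induction j using Nat.strong_induction_on with
    | _ j ih =>
      rcases Nat.lt_or_ge j d with h | h
      · rw [Nat.mod_eq_of_lt h]
      · have h1 : j = (j - d) + d := by omega
        have h2 : (g ∘ f)^[j] (0 : Fin n) = (g ∘ f)^[j - d] 0 := by
          conv_lhs => rw [h1]
          rw [iterate_add_apply, hd0]
        rw [h2, ih (j - d) (by omega), Nat.mod_eq_sub_mod h]
  -- injectivity of j ↦ (g∘f)^[j] 0 on [0, d)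
  have hinjv : ∀ a b, a < d → b < d → (g ∘ f)^[a] (0 : Fin n) = (g ∘ f)^[b] 0 → a = b := by
    have haux : ∀ a b, a < b → b < d → (g ∘ f)^[a] (0 : Fin n) = (g ∘ f)^[b] 0 → False := by
      intro a b hab hbd heq
      have h1 : (g ∘ f)^[a] ((g ∘ f)^[b - a] (0 : Fin n)) = (g ∘ f)^[a] 0 := by
        rw [← iterate_add_apply, show a + (b - a) = b by omega, heq]
      have h2 : (g ∘ f)^[b - a] (0 : Fin n) = 0 := hcinj.iterate a h1
      exact Nat.find_min hper (show b - a < d by omega) ⟨by omega, h2⟩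
    intro a b ha hb heq
    rcases lt_trichotomy a b with h | h | h
    · exact absurd (haux a b h hb heq) (not_false)
    · exact h
    · exact absurd (haux b a h ha heq.symm) (not_false)
  -- indexed injectivity of the walk on [0, 2d)
  have hinjw : ∀ a b, a < 2 * d → b < 2 * d → walk f g a = walk f g b → a = b := by
    intro a b ha hb heq
    rcases Nat.even_or_odd a with ⟨a', rfl⟩ | ⟨a', rfl⟩ <;>
      rcases Nat.even_or_odd b with ⟨b', rfl⟩ | ⟨b', rfl⟩
    · rw [show a' + a' = 2 * a' by ring, show b' + b' = 2 * b' by ring] at *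
      rw [walk_even, walk_even] at heq
      have := hinjv a' b' (by omega) (by omega) heq
      omega
    · rw [show a' + a' = 2 * a' by ring] at *
      rw [walk_even, walk_odd] at heq
      exact absurd heq.symm (disj_AB hf hg hf' hg' b' a')
    · rw [show b' + b' = 2 * b' by ring] at *
      rw [walk_odd, walk_even] at heq
      exact absurd heq (disj_AB hf hg hf' hg' a' b')
    · rw [walk_odd, walk_odd] at heq
      have := hinjv a' b' (by omega) (by omega) (hf.injective heq)
      omega
  -- indexed surjectivity with indices < 2d
  have hsurjw : ∀ x : Fin n, ∃ i, i < 2 * d ∧ walk f g i = x := by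
    intro x
    rcases hre x with ⟨j, hj⟩ | ⟨j, hj⟩
    · refine ⟨2 * (j % d), by have := Nat.mod_lt j hdpos; omega, ?_⟩
      rw [walk_even, ← hmod, hj]
    · refine ⟨2 * (j % d) + 1, by have := Nat.mod_lt j hdpos; omega, ?_⟩
      rw [walk_odd, ← hmod, hj]
  -- n = 2 * d
  have hnd : n = 2 * d := by
    have hW : ∀ i : Fin (2 * d), walk f g i.1 = walk f g i.1 := fun _ => rfl
    haveI : NeZero (2 * d) := ⟨by omega⟩
    have h1 : 2 * d ≤ n := by
      have hinj : Injective (fun i : Fin (2 * d) => walk f g i.1) := by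
        intro a b hab
        exact Fin.ext (hinjw a.1 b.1 a.2 b.2 hab)
      simpa using Fintype.card_le_of_injective _ hinj
    have h2 : n ≤ 2 * d := by
      have hsur : Surjective (fun i : Fin (2 * d) => walk f g i.1) := by
        intro x
        obtain ⟨i, hi, hw⟩ := hsurjw x
        exact ⟨⟨i, hi⟩, hw⟩
      simpa using Fintype.card_le_of_surjective _ hsur
    omega
  constructor
  · rw [Fintype.bijective_iff_injective_and_card]
    refine ⟨?_, rfl⟩
    intro a b hab
    exact Fin.ext (hinjw a.1 b.1 (by omega) (by omega) hab)
  · have hwd : walk f g (2 * d) = 0 := by rw [walk_even, hd0]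
    exact (congrArg (walk f g) hnd).trans hwd

end Main
/-! ### The standard pair of matchings -/

section Std

variable [NeZero n]

lemma val_add_one' {i : Fin n} (h : i.1 + 1 < n) : (i + 1).1 = i.1 + 1 := by
  have h2 : 1 < n := by omega
  rw [Fin.val_add, Fin.val_one', Nat.mod_eq_of_lt h2, Nat.mod_eq_of_lt h]

lemma val_sub_one' (h2 : 2 ≤ n) (i : Fin n) :
    (i - 1).1 = if i.1 = 0 then n - 1 else i.1 - 1 := by
  have hi := i.2
  rw [Fin.sub_def]
  simp only [Fin.val_one', Nat.mod_eq_of_lt (show 1 < n by omega)]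
  by_cases h : i.1 = 0
  · rw [if_pos h, h, Nat.add_zero, Nat.mod_eq_of_lt (by omega)]
  · rw [if_neg h, show n - 1 + i.1 = (i.1 - 1) + n by omega, Nat.add_mod_right,
      Nat.mod_eq_of_lt (by omega)]

def stdF (i : Fin n) : Fin n := if Even i.1 then i + 1 else i - 1

def stdG (i : Fin n) : Fin n := stdF (i - 1) + 1

variable (hn : Even n)
include hn

lemma two_le : 2 ≤ n := by
  obtain ⟨b, hb⟩ := hn
  have := NeZero.pos n
  omega

lemma stdF_val_even {i : Fin n} (h : Even i.1) : (stdF i).1 = i.1 + 1 := by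
  obtain ⟨b, hb⟩ := hn
  obtain ⟨a, ha⟩ := h
  have hi := i.2
  rw [stdF, if_pos ⟨a, ha⟩, val_add_one' (by omega)]

lemma stdF_val_odd {i : Fin n} (h : ¬ Even i.1) : (stdF i).1 = i.1 - 1 := by
  have h0 : i.1 ≠ 0 := fun h' => h (h' ▸ Even.zero)
  rw [stdF, if_neg h, val_sub_one' (two_le hn), if_neg h0]

lemma stdF_invol : Involutive (stdF : Fin n → Fin n) := by
  intro i
  have hi := i.2
  by_cases h : Even i.1
  · have hv := stdF_val_even hn h
    have h2 : ¬ Even ((stdF i).1) := by rw [hv]; simp [Nat.even_add_one, h]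
    apply Fin.ext
    rw [stdF_val_odd hn h2, hv]
    omega
  · have h0 : i.1 ≠ 0 := fun h' => h (h' ▸ Even.zero)
    have hv := stdF_val_odd hn h
    have h2 : Even ((stdF i).1) := by
      rw [hv]
      rcases Nat.even_or_odd i.1 with h' | h'
      · exact absurd h' h
      · obtain ⟨r, hr⟩ := h'
        exact ⟨r, by omega⟩
    apply Fin.ext
    rw [stdF_val_even hn h2, hv]
    omega

lemma stdF_ne (i : Fin n) : stdF i ≠ i := by
  intro h
  have hv := congrArg Fin.val h
  by_cases he : Even i.1
  · rw [stdF_val_even hn he] at hv; omega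
  · have h0 : i.1 ≠ 0 := fun h' => he (h' ▸ Even.zero)
    rw [stdF_val_odd hn he] at hv; omega

lemma stdG_invol : Involutive (stdG : Fin n → Fin n) := by
  intro i
  rw [stdG, stdG, add_sub_cancel_right, stdF_invol hn, sub_add_cancel]

lemma stdG_ne (i : Fin n) : stdG i ≠ i := by
  intro h
  rw [stdG] at h
  exact stdF_ne hn (i - 1) (by rw [eq_sub_iff_add_eq.mpr h])

lemma stdG_val_odd {i : Fin n} (h : ¬ Even i.1) (h2 : i.1 + 1 < n) : (stdG i).1 = i.1 + 1 := by
  have h0 : i.1 ≠ 0 := fun h' => h (h' ▸ Even.zero)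
  have hsub : (i - 1).1 = i.1 - 1 := by rw [val_sub_one' (two_le hn), if_neg h0]
  have hev : Even ((i - 1).1) := by
    rw [hsub]
    rcases Nat.even_or_odd i.1 with h' | h'
    · exact absurd h' h
    · obtain ⟨r, hr⟩ := h'
      exact ⟨r, by omega⟩
  have hF : (stdF (i - 1)).1 = i.1 := by
    rw [stdF_val_even hn hev, hsub]
    omega
  rw [stdG, val_add_one' (by omega : (stdF (i-1)).1 + 1 < n), hF]

lemma stdG_last : stdG (⟨n - 1, by have := two_le hn; omega⟩ : Fin n) = 0 := by
  have h2 := two_le hn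
  obtain ⟨b, hb⟩ := hn
  set i : Fin n := ⟨n - 1, by omega⟩ with hi
  have h0 : i.1 ≠ 0 := by simp [hi]; omega
  have hsub : (i - 1).1 = n - 2 := by
    rw [val_sub_one' h2, if_neg h0]
    simp only [hi]
    omega
  have hev : Even ((i - 1).1) := by rw [hsub]; exact ⟨b - 1, by omega⟩
  have hF : (stdF (i - 1)).1 = n - 1 := by
    rw [stdF_val_even ⟨b, hb⟩ hev, hsub]
    omega
  apply Fin.ext
  rw [stdG, Fin.val_add, Fin.val_one', Nat.mod_eq_of_lt (show 1 < n by omega), hF,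
    show n - 1 + 1 = n by omega, Nat.mod_self, Fin.val_zero]

lemma stdG_zero : stdG (0 : Fin n) = ⟨n - 1, by have := two_le hn; omega⟩ := by
  have h2 := two_le hn
  obtain ⟨b, hb⟩ := hn
  have hsub : ((0 : Fin n) - 1).1 = n - 1 := by
    rw [val_sub_one' h2, if_pos (Fin.val_zero n)]
  have hodd : ¬ Even (((0 : Fin n) - 1).1) := by
    rw [hsub]
    intro ⟨r, hr⟩
    omega
  have hF : (stdF ((0 : Fin n) - 1)).1 = n - 2 := by
    rw [stdF_val_odd ⟨b, hb⟩ hodd, hsub]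
    omega
  apply Fin.ext
  rw [stdG, val_add_one' (by omega : (stdF ((0:Fin n) - 1)).1 + 1 < n), hF]
  show n - 2 + 1 = n - 1
  omega

lemma stdG_val_even_pos {i : Fin n} (h : Even i.1) (h0 : i.1 ≠ 0) : (stdG i).1 = i.1 - 1 := by
  have h2 := two_le hn
  have hi := i.2
  have hsub : (i - 1).1 = i.1 - 1 := by rw [val_sub_one' h2, if_neg h0]
  have hodd : ¬ Even ((i - 1).1) := by
    rw [hsub]
    obtain ⟨a, ha⟩ := h
    intro ⟨r, hr⟩
    omega
  have hF : (stdF (i - 1)).1 = i.1 - 2 := by rw [stdF_val_odd hn hodd, hsub]; omega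
  obtain ⟨a, ha⟩ := h
  rw [stdG, val_add_one' (by omega : (stdF (i - 1)).1 + 1 < n), hF]
  omega

end Std
/-! ### Compatibility of the walk with the standard matchings -/

section Compat

variable [NeZero n] {f g : Fin n → Fin n}

lemma walk_stdF (hf : Involutive f) (hn : Even n) (i : Fin n) :
    walk f g (stdF i).1 = f (walk f g i.1) := by
  by_cases h : Even i.1
  · rw [stdF_val_even hn h, walk, if_pos h]
  · have h0 : i.1 ≠ 0 := fun h' => h (h' ▸ Even.zero)
    rw [stdF_val_odd hn h]
    have h1 : i.1 = (i.1 - 1) + 1 := by omega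
    have h2 : Even (i.1 - 1) := by
      rcases Nat.even_or_odd i.1 with h' | h'
      · exact absurd h' h
      · obtain ⟨r, hr⟩ := h'
        exact ⟨r, by omega⟩
    conv_rhs => rw [h1]
    rw [walk, if_pos h2, hf]

lemma walk_stdG (hf : Involutive f) (hg : Involutive g) (hn : Even n)
    (hwn : walk f g n = 0) (i : Fin n) :
    walk f g (stdG i).1 = g (walk f g i.1) := by
  have h2n := two_le hn
  have hoddn : ¬ Even (n - 1) := by
    obtain ⟨b, hb⟩ := hn
    rintro ⟨r, hr⟩
    omega
  have h1n : n = (n - 1) + 1 := by omega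
  have h3 : walk f g n = g (walk f g (n - 1)) := by
    rw [congrArg (walk f g) h1n, walk, if_neg hoddn]
  by_cases h : Even i.1
  · by_cases h0 : i.1 = 0
    · have hieq : i = 0 := Fin.ext (by rw [h0, Fin.val_zero])
      rw [hieq, stdG_zero hn]
      show walk f g (n - 1) = g (walk f g (0 : Fin n).1)
      rw [Fin.val_zero]
      calc walk f g (n - 1) = g (g (walk f g (n - 1))) := (hg _).symm
        _ = g (walk f g 0) := by rw [← h3, hwn]; rfl
    · rw [stdG_val_even_pos hn h h0]
      have h1 : i.1 = (i.1 - 1) + 1 := by omega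
      have hodd : ¬ Even (i.1 - 1) := by
        obtain ⟨a, ha⟩ := h
        rintro ⟨r, hr⟩
        omega
      conv_rhs => rw [h1]
      rw [walk, if_neg hodd, hg]
  · by_cases hlast : i.1 + 1 < n
    · rw [stdG_val_odd hn h hlast, walk, if_neg h]
    · have hi := i.2
      have hieq : i = ⟨n - 1, by omega⟩ := Fin.ext (show i.1 = n - 1 by omega)
      rw [hieq, stdG_last hn]
      show walk f g (0 : Fin n).1 = g (walk f g (n - 1))
      rw [Fin.val_zero]
      calc walk f g 0 = (0 : Fin n) := rfl
        _ = walk f g n := hwn.symm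
        _ = g (walk f g (n - 1)) := h3

lemma walk_of_perm (hn : Even n) (w : Equiv.Perm (Fin n)) (hw : w 0 = 0) :
    ∀ j (hj : j < n),
      walk (fun x => w (stdF (w.symm x))) (fun x => w (stdG (w.symm x))) j = w ⟨j, hj⟩ := by
  intro j
  induction j with
  | zero =>
    intro hj
    have h0 : (⟨0, hj⟩ : Fin n) = 0 := Fin.ext (Fin.val_zero n).symm
    rw [h0, hw]
    rfl
  | succ j ih =>
    intro hj
    have hj' : j < n := by omega
    by_cases h : Even j
    · rw [walk, if_pos h, ih hj', Equiv.symm_apply_apply]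
      congr 1
      exact Fin.ext ((stdF_val_even hn h).trans rfl)
    · rw [walk, if_neg h, ih hj', Equiv.symm_apply_apply]
      congr 1
      exact Fin.ext ((stdG_val_odd hn h hj).trans rfl)

lemma conj_iterate (w : Equiv.Perm (Fin n)) (h : Fin n → Fin n) :
    ∀ (j : ℕ) (x : Fin n), (fun y => w (h (w.symm y)))^[j] x = w (h^[j] (w.symm x)) := by
  intro j
  induction j with
  | zero => intro x; simp
  | succ j ih =>
    intro x
    rw [iterate_succ_apply', iterate_succ_apply', ih]
    show w (h (w.symm (w _))) = _
    rw [Equiv.symm_apply_apply]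

lemma c0_iter_val (hn : Even n) : ∀ j, 2 * j < n → ((stdG ∘ stdF)^[j] (0 : Fin n)).1 = 2 * j := by
  intro j
  induction j with
  | zero => intro _; simp [Fin.val_zero]
  | succ j ih =>
    intro h
    have h' : 2 * j < n := by omega
    rw [iterate_succ_apply']
    have hev : Even (((stdG ∘ stdF)^[j] (0 : Fin n)).1) := by
      rw [ih h']
      exact ⟨j, by omega⟩
    have hF : (stdF ((stdG ∘ stdF)^[j] (0 : Fin n))).1 = 2 * j + 1 := by
      rw [stdF_val_even hn hev, ih h']
    have hodd : ¬ Even ((stdF ((stdG ∘ stdF)^[j] (0 : Fin n))).1) := by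
      rw [hF]
      rintro ⟨r, hr⟩
      omega
    show (stdG (stdF ((stdG ∘ stdF)^[j] (0 : Fin n)))).1 = 2 * (j + 1)
    rw [stdG_val_odd hn hodd (by rw [hF]; omega), hF]
    omega

lemma reach_conj (hn : Even n) (w : Equiv.Perm (Fin n)) (hw : w 0 = 0) (x : Fin n) :
    Reach (fun y => w (stdF (w.symm y))) (fun y => w (stdG (w.symm y))) x := by
  have hws : w.symm 0 = 0 := by rw [Equiv.symm_apply_eq]; exact hw.symm
  have hGF : ((fun y => w (stdG (w.symm y))) ∘ (fun y => w (stdF (w.symm y))))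
      = fun y => w ((stdG ∘ stdF) (w.symm y)) := by
    funext y
    show w (stdG (w.symm (w (stdF (w.symm y))))) = _
    rw [Equiv.symm_apply_apply]
    rfl
  have hiter : ∀ j, ((fun y => w (stdG (w.symm y))) ∘ (fun y => w (stdF (w.symm y))))^[j] (0 : Fin n)
      = w ((stdG ∘ stdF)^[j] 0) := by
    intro j
    rw [hGF, conj_iterate, hws]
  have hvx := (w.symm x).2
  rcases Nat.even_or_odd (w.symm x).1 with ⟨j, hj⟩ | ⟨j, hj⟩
  · left
    refine ⟨j, ?_⟩
    rw [hiter]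
    have h1 : (stdG ∘ stdF)^[j] (0 : Fin n) = w.symm x :=
      Fin.ext (by rw [c0_iter_val hn j (by omega)]; omega)
    rw [h1, Equiv.apply_symm_apply]
  · right
    refine ⟨j, ?_⟩
    rw [hiter]
    show w (stdF (w.symm (w ((stdG ∘ stdF)^[j] 0)))) = x
    rw [Equiv.symm_apply_apply]
    have hb : 2 * j < n := by omega
    have hev : Even (((stdG ∘ stdF)^[j] (0 : Fin n)).1) := by
      rw [c0_iter_val hn j hb]
      exact ⟨j, by omega⟩
    have h1 : stdF ((stdG ∘ stdF)^[j] (0 : Fin n)) = w.symm x :=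
      Fin.ext (by rw [stdF_val_even hn hev, c0_iter_val hn j hb]; omega)
    rw [h1, Equiv.apply_symm_apply]

end Compat
/-! ### Assembling the equivalence -/

section Assemble

lemma conjF_invol (hn : Even n) [NeZero n] (w : Equiv.Perm (Fin n)) :
    Involutive (fun x => w (stdF (w.symm x))) := fun x => by
  show w (stdF (w.symm (w (stdF (w.symm x))))) = x
  rw [Equiv.symm_apply_apply, stdF_invol hn, Equiv.apply_symm_apply]

lemma conjF_ne (hn : Even n) [NeZero n] (w : Equiv.Perm (Fin n)) :
    ∀ x, (fun x => w (stdF (w.symm x))) x ≠ x := fun x h =>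
  stdF_ne hn (w.symm x) ((Equiv.apply_eq_iff_eq_symm_apply w).mp h)

lemma conjG_invol (hn : Even n) [NeZero n] (w : Equiv.Perm (Fin n)) :
    Involutive (fun x => w (stdG (w.symm x))) := fun x => by
  show w (stdG (w.symm (w (stdG (w.symm x))))) = x
  rw [Equiv.symm_apply_apply, stdG_invol hn, Equiv.apply_symm_apply]

lemma conjG_ne (hn : Even n) [NeZero n] (w : Equiv.Perm (Fin n)) :
    ∀ x, (fun x => w (stdG (w.symm x))) x ≠ x := fun x h =>
  stdG_ne hn (w.symm x) ((Equiv.apply_eq_iff_eq_symm_apply w).mp h)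

variable (n : ℕ) [NeZero n]

abbrev PairT := {p : Setoid (Fin n) × Setoid (Fin n) //
    (∀ x, Nat.card {y // p.1.r x y} = 2) ∧
    (∀ x, Nat.card {y // p.2.r x y} = 2) ∧
    p.1 ⊔ p.2 = ⊤}

abbrev PermT := {w : Equiv.Perm (Fin n) // w 0 = 0}

variable {n}

lemma fwd_aux (P : PairT n) :
    Bijective (fun i : Fin n => walk (pf P.1.1 P.2.1) (pf P.1.2 P.2.2.1) i.1) ∧
      walk (pf P.1.1 P.2.1) (pf P.1.2 P.2.2.1) n = 0 := by
  have hf := pf_invol P.1.1 P.2.1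
  have hg := pf_invol P.1.2 P.2.2.1
  have hconn : matchSetoid _ hf ⊔ matchSetoid _ hg = ⊤ := by
    rw [matchSetoid_pf _ _ hf, matchSetoid_pf _ _ hg]
    exact P.2.2.2
  exact walk_main hf hg (pf_ne _ _) (pf_ne _ _)
    (reach_of_conn hf hg (pf_ne _ _) (pf_ne _ _) hconn)

noncomputable def fwdPerm (P : PairT n) : Equiv.Perm (Fin n) :=
  Equiv.ofBijective _ (fwd_aux P).1

lemma fwdPerm_apply (P : PairT n) (i : Fin n) :
    fwdPerm P i = walk (pf P.1.1 P.2.1) (pf P.1.2 P.2.2.1) i.1 := rfl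

noncomputable def fwd (P : PairT n) : PermT n :=
  ⟨fwdPerm P, by
    rw [fwdPerm_apply, Fin.val_zero]
    rfl⟩

lemma fwd_fst (P : PairT n) : (fwd P).1 = fwdPerm P := rfl

noncomputable def bwd (hn : Even n) (W : PermT n) : PairT n :=
  ⟨(matchSetoid (fun x => W.1 (stdF (W.1.symm x))) (conjF_invol hn W.1),
    matchSetoid (fun x => W.1 (stdG (W.1.symm x))) (conjG_invol hn W.1)),
   card_matchSetoid (conjF_invol hn W.1) (conjF_ne hn W.1),
   card_matchSetoid (conjG_invol hn W.1) (conjG_ne hn W.1),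
   conn_of_reach (conjF_invol hn W.1) (conjG_invol hn W.1)
     (fun x => reach_conj hn W.1 W.2 x)⟩

lemma fwd_bwd (hn : Even n) (W : PermT n) : fwd (bwd hn W) = W := by
  apply Subtype.ext
  apply Equiv.ext
  intro i
  have h1 : (fwd (bwd hn W)).1 i
      = walk (fun x => W.1 (stdF (W.1.symm x))) (fun x => W.1 (stdG (W.1.symm x))) i.1 := by
    rw [fwd_fst, fwdPerm_apply]
    dsimp only [bwd]
    exact congrArg₂ (fun a b => walk a b i.1) (pf_matchSetoid _ _) (pf_matchSetoid _ _)
  rw [h1]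
  exact walk_of_perm hn W.1 W.2 i.1 i.2

lemma bwd_fwd (hn : Even n) (P : PairT n) : bwd hn (fwd P) = P := by
  obtain ⟨⟨p, q⟩, hp, hq, hco⟩ := P
  have hf : Involutive (pf p hp) := pf_invol p hp
  have hg : Involutive (pf q hq) := pf_invol q hq
  set P' : PairT n := ⟨⟨p, q⟩, hp, hq, hco⟩ with hP'
  set W := fwd P' with hW
  have hwn : walk (pf p hp) (pf q hq) n = 0 := (fwd_aux P').2
  have happ : ∀ i : Fin n, W.1 i = walk (pf p hp) (pf q hq) i.1 := fun i => by
    rw [hW, fwd_fst, fwdPerm_apply]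
  have hstf : ∀ i : Fin n, W.1 (stdF i) = pf p hp (W.1 i) := fun i => by
    rw [happ, happ]
    exact walk_stdF hf hn i
  have hstg : ∀ i : Fin n, W.1 (stdG i) = pf q hq (W.1 i) := fun i => by
    rw [happ, happ]
    exact walk_stdG hf hg hn hwn i
  apply Subtype.ext
  dsimp only [bwd]
  have h1 : matchSetoid (fun x => W.1 (stdF (W.1.symm x))) (conjF_invol hn W.1) = p := by
    apply Setoid.ext
    intro a b
    show (b = a ∨ b = W.1 (stdF (W.1.symm a))) ↔ p.r a b
    have hFa : W.1 (stdF (W.1.symm a)) = pf p hp a := by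
      rw [hstf (W.1.symm a), Equiv.apply_symm_apply]
    rw [hFa]
    exact (rel_iff_pf p hp a b).symm
  have h2 : matchSetoid (fun x => W.1 (stdG (W.1.symm x))) (conjG_invol hn W.1) = q := by
    apply Setoid.ext
    intro a b
    show (b = a ∨ b = W.1 (stdG (W.1.symm a))) ↔ q.r a b
    have hGa : W.1 (stdG (W.1.symm a)) = pf q hq a := by
      rw [hstg (W.1.symm a), Equiv.apply_symm_apply]
    rw [hGa]
    exact (rel_iff_pf q hq a b).symm
  rw [h1, h2]

noncomputable def pairPermEquiv (hn : Even n) : PairT n ≃ PermT n where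
  toFun := fwd
  invFun := bwd hn
  left_inv := bwd_fwd hn
  right_inv := fwd_bwd hn

end Assemble

/-- cardinality of permutations fixing 0 -/
lemma card_permT (m : ℕ) :
    Nat.card {w : Equiv.Perm (Fin (m + 1)) // w 0 = 0} = m.factorial := by
  have e2 : {w : Equiv.Perm (Fin (m + 1)) // w 0 = 0} ≃ Equiv.Perm (Fin m) := by
    refine
      { toFun := fun W => (Equiv.Perm.decomposeFin W.1).2
        invFun := fun σ => ⟨Equiv.Perm.decomposeFin.symm (0, σ),
          Equiv.Perm.decomposeFin_symm_apply_zero 0 σ⟩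
        left_inv := ?_
        right_inv := ?_ }
    · rintro ⟨w, hw⟩
      apply Subtype.ext
      have h1 : (Equiv.Perm.decomposeFin w).1 = 0 := by
        have h2 := Equiv.Perm.decomposeFin_symm_apply_zero
          (Equiv.Perm.decomposeFin w).1 (Equiv.Perm.decomposeFin w).2
        rw [show ((Equiv.Perm.decomposeFin w).1, (Equiv.Perm.decomposeFin w).2)
            = Equiv.Perm.decomposeFin w from rfl, Equiv.symm_apply_apply] at h2
        rw [← h2, hw]
      show Equiv.Perm.decomposeFin.symm (0, (Equiv.Perm.decomposeFin w).2) = w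
      rw [← h1, show ((Equiv.Perm.decomposeFin w).1, (Equiv.Perm.decomposeFin w).2)
          = Equiv.Perm.decomposeFin w from rfl, Equiv.symm_apply_apply]
    · intro σ
      simp
  rw [Nat.card_congr e2, Nat.card_eq_fintype_card, Fintype.card_perm, Fintype.card_fin]

end CMP

/-- The number of ordered pairs of perfect matchings of `{1,…,2k}` (partitions with all
blocks of size two) whose join is the one-block partition equals `(2k−1)!`. -/
theorem card_connected_matching_pairs (k : ℕ) :
    Nat.card {p : Setoid (Fin (2 * k)) × Setoid (Fin (2 * k)) //
        (∀ x, Nat.card {y // p.1.r x y} = 2) ∧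
        (∀ x, Nat.card {y // p.2.r x y} = 2) ∧
        p.1 ⊔ p.2 = ⊤} = (2 * k - 1).factorial := by
  rcases Nat.eq_zero_or_pos k with rfl | hk
  · have hsub : ∀ s t : Setoid (Fin (2 * 0)), s = t := fun s t =>
      Setoid.ext fun a _ => a.elim0
    have h1 : (2 * 0 - 1).factorial = 1 := rfl
    rw [h1, Nat.card_eq_one_iff_unique]
    constructor
    · constructor
      intro P Q
      apply Subtype.ext
      exact Prod.ext_iff.mpr ⟨hsub _ _, hsub _ _⟩
    · exact ⟨⟨(⊤, ⊤), fun x => x.elim0, fun x => x.elim0, by simp⟩⟩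
  · haveI : NeZero (2 * k) := ⟨by omega⟩
    have hn : Even (2 * k) := ⟨k, by ring⟩
    rw [Nat.card_congr (CMP.pairPermEquiv hn)]
    obtain ⟨m, rfl⟩ : ∃ m, k = m + 1 := ⟨k - 1, by omega⟩
    rw [show 2 * (m + 1) - 1 = 2 * m + 1 by omega]
    exact CMP.card_permT (2 * m + 1)
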